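/- Fully discrete stability: let X̂_h^{m} ∈ S_h² for m = 0,…,M solve the semi-implicit scheme ∫₀^{2π} ((α/τ)(X̂_h^{m+1}−X̂_h^m)·φ_h + ((1−α)/τ)((X̂_h^{m+1}−X̂_h^m)·ν_h^m)(ν_h^m·φ_h)) |X̂_{hθ}^m|² dθ + ∫₀^{2π} X̂_{hθ}^{m+1}·φ_{hθ} dθ = 0 for all φ_h ∈ S_h². Then (1/2)∫₀^{2π}|X̂^M_{hθ}|²dθ + Σ_{m=0}^{M−1} ∫₀^{2π}((α/τ)|X̂^{m+1}_h−X̂^m_h|² + ((1−α)/τ)|(X̂^{m+1}_h−X̂^m_h)·ν_h^m|²)|X̂^m_{hθ}|² dθ ≤ (1/2)∫₀^{2π}|X̂^0_{hθ}|²dθ. -/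

import Mathlib

open intervalIntegral
open MeasureTheory

/-- The space `S_h` of continuous, 2π-periodic functions on ℝ that are affine on each
segment `[2πj/N, 2π(j+1)/N]` of the uniform grid with `N` nodes. -/
def Sh (N : ℕ) : Set (ℝ → ℝ) :=
  {f | Continuous f ∧ (∀ s, f (s + 2 * Real.pi) = f s) ∧
    ∀ j : Fin N, ∃ a b : ℝ, ∀ s ∈ Set.Icc (2 * Real.pi * (j.val : ℝ) / N)
      (2 * Real.pi * ((j.val : ℝ) + 1) / N), f s = a * s + b}

section aux
open MeasureTheory

lemma sh_sub' {N : ℕ} {f g : ℝ → ℝ} (hf : f ∈ Sh N) (hg : g ∈ Sh N) :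
    (fun s => f s - g s) ∈ Sh N := by
  obtain ⟨hfc, hfp, hfa⟩ := hf
  obtain ⟨hgc, hgp, hga⟩ := hg
  refine ⟨hfc.sub hgc, fun s => by simp [hfp s, hgp s], fun j => ?_⟩
  obtain ⟨a, b, hab⟩ := hfa j
  obtain ⟨a', b', hab'⟩ := hga j
  exact ⟨a - a', b - b', fun s hs => by show f s - g s = _; rw [hab s hs, hab' s hs]; ring⟩

lemma sh_slope' {N : ℕ} {f : ℝ → ℝ} (hf : f ∈ Sh N) (j : Fin N) :
    ∃ a : ℝ, ∀ θ ∈ Set.Ioo (2 * Real.pi * (j.val : ℝ) / N) (2 * Real.pi * ((j.val : ℝ) + 1) / N),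
      HasDerivAt f a θ := by
  obtain ⟨a, b, hab⟩ := hf.2.2 j
  refine ⟨a, fun θ hθ => ?_⟩
  have h1 : HasDerivAt (fun s : ℝ => a * s + b) a θ := by
    simpa using ((hasDerivAt_id θ).const_mul a).add_const b
  refine h1.congr_of_eventuallyEq ?_
  filter_upwards [Ioo_mem_nhds hθ.1 hθ.2] with s hs
  exact hab s (Set.Ioo_subset_Icc_self hs)

/-- points of `(0, 2π]` that are not grid nodes -/
def goodSet (N : ℕ) : Set ℝ :=
  Set.Ioc 0 (2 * Real.pi) \ ⋃ j ∈ Finset.range (N + 1), ({2 * Real.pi * (j : ℝ) / N} : Set ℝ)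

open MeasureTheory in
lemma ae_goodSet (N : ℕ) :
    ∀ᵐ θ ∂(volume.restrict (Set.Ioc (0:ℝ) (2 * Real.pi))), θ ∈ goodSet N := by
  have h0 : volume (⋃ j ∈ Finset.range (N + 1), ({2 * Real.pi * (j : ℝ) / N} : Set ℝ)) = 0 := by
    refine (measure_biUnion_null_iff (Finset.range (N + 1)).countable_toSet).mpr ?_
    intro j _; exact measure_singleton _
  have h1 : ∀ᵐ θ : ℝ ∂volume,
      θ ∉ ⋃ j ∈ Finset.range (N + 1), ({2 * Real.pi * (j : ℝ) / N} : Set ℝ) :=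
    measure_eq_zero_iff_ae_notMem.mp h0
  filter_upwards [ae_restrict_of_ae h1, ae_restrict_mem measurableSet_Ioc] with θ ha hb
  exact ⟨hb, ha⟩

lemma goodSet_seg {N : ℕ} (hN : 0 < N) {θ : ℝ} (hθ : θ ∈ goodSet N) :
    ∃ j : Fin N, θ ∈ Set.Ioo (2 * Real.pi * ((j : Fin N).val : ℝ) / N)
      (2 * Real.pi * (((j : Fin N).val : ℝ) + 1) / N) := by
  have hπ := Real.pi_pos
  obtain ⟨⟨hθ0, hθ2⟩, hnode⟩ := hθ
  have hNR : (0:ℝ) < N := Nat.cast_pos.mpr hN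
  have hnode' : ∀ j : ℕ, j ≤ N → θ ≠ 2 * Real.pi * (j : ℝ) / N := by
    intro j hj heq
    apply hnode
    simp only [Set.mem_iUnion, Set.mem_singleton_iff]
    exact ⟨j, Finset.mem_range.mpr (Nat.lt_succ_of_le hj), heq⟩
  set x : ℝ := θ * N / (2 * Real.pi) with hx
  have hθx : θ = x * (2 * Real.pi) / N := by rw [hx]; field_simp
  have hx0 : 0 < x := by positivity
  have hθlt : θ < 2 * Real.pi := by
    refine lt_of_le_of_ne hθ2 ?_
    have := hnode' N le_rfl
    intro h; exact this (by rw [h]; field_simp)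
  have hxN : x < N := by
    rw [hx, div_lt_iff₀ (by positivity)]
    nlinarith
  have hfl0 : 0 ≤ ⌊x⌋ := Int.floor_nonneg.mpr hx0.le
  set j : ℕ := ⌊x⌋.toNat with hj
  have hjcast : (j : ℝ) = (⌊x⌋ : ℝ) := by
    rw [hj]; exact_mod_cast congrArg (Int.cast : ℤ → ℝ) (Int.toNat_of_nonneg hfl0)
  have hjx : (j : ℝ) ≤ x := by rw [hjcast]; exact Int.floor_le x
  have hxj1 : x < (j : ℝ) + 1 := by rw [hjcast]; exact Int.lt_floor_add_one x
  have hjN : j < N := by exact_mod_cast lt_of_le_of_lt hjx hxN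
  have hjne : (j : ℝ) ≠ x := by
    intro h
    refine hnode' j hjN.le ?_
    rw [hθx, ← h]; ring
  have hjlt : (j : ℝ) < x := lt_of_le_of_ne hjx hjne
  refine ⟨⟨j, hjN⟩, ?_, ?_⟩
  · rw [hθx]
    refine (div_lt_div_iff_of_pos_right hNR).mpr ?_
    nlinarith
  · rw [hθx]
    refine (div_lt_div_iff_of_pos_right hNR).mpr ?_
    nlinarith

lemma sh_diff_good {N : ℕ} (hN : 0 < N) {f : ℝ → ℝ} (hf : f ∈ Sh N) {θ : ℝ}
    (hθ : θ ∈ goodSet N) : DifferentiableAt ℝ f θ := by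
  obtain ⟨j, hj⟩ := goodSet_seg hN hθ
  obtain ⟨a, ha⟩ := sh_slope' hf j
  exact (ha θ hj).differentiableAt

lemma sh_bound {N : ℕ} (hN : 0 < N) {f : ℝ → ℝ} (hf : f ∈ Sh N) :
    ∃ C, ∀ θ ∈ goodSet N, |deriv f θ| ≤ C := by
  have hne : (Finset.univ : Finset (Fin N)).Nonempty := ⟨⟨0, hN⟩, Finset.mem_univ _⟩
  choose a ha using fun j => sh_slope' hf j
  refine ⟨Finset.univ.sup' hne fun j => |a j|, fun θ hθ => ?_⟩
  obtain ⟨j, hj⟩ := goodSet_seg hN hθ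
  rw [(ha j θ hj).deriv]
  exact Finset.le_sup' (fun j => |a j|) (Finset.mem_univ j)

open MeasureTheory in
lemma intint_bound {N : ℕ} {g : ℝ → ℝ} (hm : Measurable g) {C : ℝ}
    (hb : ∀ θ ∈ goodSet N, |g θ| ≤ C) :
    IntervalIntegrable g volume 0 (2 * Real.pi) := by
  have h2π : (0:ℝ) ≤ 2 * Real.pi := by positivity
  rw [intervalIntegrable_iff_integrableOn_Ioc_of_le h2π]
  refine Integrable.mono' (g := fun _ => C)
    (integrableOn_const measure_Ioc_lt_top.ne) hm.aestronglyMeasurable ?_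
  filter_upwards [ae_goodSet N] with θ hθ
  simpa using hb θ hθ

end aux

/-- Unconditional stability of the fully discrete semi-implicit scheme
for the reparametrized curve shortening flow:
(1/2)∫|X̂^M_{hθ}|² + Σ_{m<M} ∫ ((α/τ)|X̂^{m+1}−X̂^m|² + ((1−α)/τ)|(X̂^{m+1}−X̂^m)·ν^m|²)|X̂^m_{hθ}|²
  ≤ (1/2)∫|X̂^0_{hθ}|². -/
theorem stmt10 (N M : ℕ) (hN : 0 < N) (α τ : ℝ) (hα : α ∈ Set.Ioc (0 : ℝ) 1) (hτ : 0 < τ)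
    (X νh : ℕ → ℝ → Fin 2 → ℝ)
    (hXSh : ∀ m β, (fun θ => X m θ β) ∈ Sh N)
    (hνunit : ∀ m θ, ∑ β, νh m θ β ^ 2 = 1)
    (hνconst : ∀ m, ∀ j : Fin N, ∀ θ ∈ Set.Ico (2 * Real.pi * (j.val : ℝ) / N)
      (2 * Real.pi * ((j.val : ℝ) + 1) / N), νh m θ = νh m (2 * Real.pi * (j.val : ℝ) / N))
    (hνorth : ∀ m, ∀ j : Fin N,
      ∑ β, νh m (2 * Real.pi * (j.val : ℝ) / N) β *
        (X m (2 * Real.pi * ((j.val : ℝ) + 1) / N) β - X m (2 * Real.pi * (j.val : ℝ) / N) β) = 0)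
    (hscheme : ∀ m < M, ∀ φ : ℝ → Fin 2 → ℝ, (∀ β, (fun θ => φ θ β) ∈ Sh N) →
      (∫ θ in (0 : ℝ)..(2 * Real.pi),
        ((α / τ) * ∑ β, (X (m + 1) θ β - X m θ β) * φ θ β
          + ((1 - α) / τ) * (∑ β, (X (m + 1) θ β - X m θ β) * νh m θ β)
              * (∑ β, νh m θ β * φ θ β))
        * (∑ β, (deriv (fun u => X m u β) θ) ^ 2))
      + (∫ θ in (0 : ℝ)..(2 * Real.pi),
          ∑ β, deriv (fun u => X (m + 1) u β) θ * deriv (fun u => φ u β) θ) = 0) :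
    (1 / 2) * (∫ θ in (0 : ℝ)..(2 * Real.pi), ∑ β, (deriv (fun u => X M u β) θ) ^ 2)
      + ∑ m ∈ Finset.range M, (∫ θ in (0 : ℝ)..(2 * Real.pi),
          ((α / τ) * ∑ β, (X (m + 1) θ β - X m θ β) ^ 2
            + ((1 - α) / τ) * (∑ β, (X (m + 1) θ β - X m θ β) * νh m θ β) ^ 2)
          * (∑ β, (deriv (fun u => X m u β) θ) ^ 2))
      ≤ (1 / 2) * (∫ θ in (0 : ℝ)..(2 * Real.pi), ∑ β, (deriv (fun u => X 0 u β) θ) ^ 2) := by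
  have hπ := Real.pi_pos
  have h2π : (0:ℝ) ≤ 2 * Real.pi := by positivity
  -- integrability of the energy integrands
  have hQint : ∀ m : ℕ, IntervalIntegrable
      (fun θ => ∑ β : Fin 2, (deriv (fun u => X m u β) θ) ^ 2) volume 0 (2 * Real.pi) := by
    intro m
    have hmeas : Measurable fun θ => ∑ β : Fin 2, (deriv (fun u => X m u β) θ) ^ 2 :=
      Finset.measurable_sum _ fun β _ => (measurable_deriv _).pow_const 2
    choose C hC using fun β => sh_bound hN (hXSh m β)
    refine intint_bound (N := N) hmeas (C := ∑ β, (C β) ^ 2) fun θ hθ => ?_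
    rw [abs_of_nonneg (by positivity)]
    refine Finset.sum_le_sum fun β _ => ?_
    calc (deriv (fun u => X m u β) θ) ^ 2 = |deriv (fun u => X m u β) θ| ^ 2 := (sq_abs _).symm
      _ ≤ (C β) ^ 2 := pow_le_pow_left₀ (abs_nonneg _) (hC β θ hθ) 2
  -- the key one-step estimate
  have key : ∀ m, m < M →
      (∫ θ in (0 : ℝ)..(2 * Real.pi),
          ((α / τ) * ∑ β, (X (m + 1) θ β - X m θ β) ^ 2
            + ((1 - α) / τ) * (∑ β, (X (m + 1) θ β - X m θ β) * νh m θ β) ^ 2)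
          * (∑ β, (deriv (fun u => X m u β) θ) ^ 2))
      ≤ (∫ θ in (0 : ℝ)..(2 * Real.pi), ∑ β, (deriv (fun u => X m u β) θ) ^ 2) / 2
        - (∫ θ in (0 : ℝ)..(2 * Real.pi), ∑ β, (deriv (fun u => X (m+1) u β) θ) ^ 2) / 2 := by
    intro m hm
    have hφSh : ∀ β : Fin 2, (fun θ => X (m + 1) θ β - X m θ β) ∈ Sh N :=
      fun β => sh_sub' (hXSh (m + 1) β) (hXSh m β)
    have hsch := hscheme m hm (fun θ β => X (m + 1) θ β - X m θ β) hφSh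
    beta_reduce at hsch
    have hcong : (∫ θ in (0 : ℝ)..(2 * Real.pi),
        (α / τ * ∑ β, (X (m + 1) θ β - X m θ β) * (X (m + 1) θ β - X m θ β)
          + (1 - α) / τ * (∑ β, (X (m + 1) θ β - X m θ β) * νh m θ β)
              * (∑ β, νh m θ β * (X (m + 1) θ β - X m θ β)))
        * (∑ β, (deriv (fun u => X m u β) θ) ^ 2))
        = ∫ θ in (0 : ℝ)..(2 * Real.pi),
          ((α / τ) * ∑ β, (X (m + 1) θ β - X m θ β) ^ 2
            + ((1 - α) / τ) * (∑ β, (X (m + 1) θ β - X m θ β) * νh m θ β) ^ 2)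
          * (∑ β, (deriv (fun u => X m u β) θ) ^ 2) := by
      refine intervalIntegral.integral_congr fun θ _ => ?_
      simp only [Fin.sum_univ_two]
      ring
    rw [hcong] at hsch
    have hPmeas : Measurable fun θ => ∑ β : Fin 2, deriv (fun u => X (m + 1) u β) θ * deriv (fun u => X (m + 1) u β - X m u β) θ :=
      Finset.measurable_sum _ fun β _ => (measurable_deriv _).mul (measurable_deriv _)
    choose C hC using fun β : Fin 2 => sh_bound hN (hXSh (m + 1) β)
    choose D hD using fun β : Fin 2 => sh_bound hN (hφSh β)
    have hPint : IntervalIntegrable (fun θ => ∑ β : Fin 2, deriv (fun u => X (m + 1) u β) θ * deriv (fun u => X (m + 1) u β - X m u β) θ) volume 0 (2 * Real.pi) := by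
      refine intint_bound (N := N) hPmeas (C := ∑ β, C β * D β) fun θ hθ => ?_
      calc |∑ β : Fin 2, deriv (fun u => X (m + 1) u β) θ * deriv (fun u => X (m + 1) u β - X m u β) θ|
          ≤ ∑ β : Fin 2, |deriv (fun u => X (m + 1) u β) θ *
            deriv (fun u => X (m + 1) u β - X m u β) θ| := Finset.abs_sum_le_sum_abs _ _
        _ ≤ ∑ β, C β * D β := Finset.sum_le_sum fun β _ => by
            rw [abs_mul]
            exact mul_le_mul (hC β θ hθ) (hD β θ hθ) (abs_nonneg _)
              ((abs_nonneg _).trans (hC β θ hθ))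
    have hnn : 0 ≤ ∫ θ in (0 : ℝ)..(2 * Real.pi),
        ((∑ β : Fin 2, deriv (fun u => X (m + 1) u β) θ * deriv (fun u => X (m + 1) u β - X m u β) θ) + ((1 / 2) * (∑ β : Fin 2, (deriv (fun u => X m u β) θ) ^ 2) - (1 / 2) * (∑ β : Fin 2, (deriv (fun u => X (m + 1) u β) θ) ^ 2))) := by
      rw [intervalIntegral.integral_of_le h2π]
      refine MeasureTheory.integral_nonneg_of_ae ?_
      filter_upwards [ae_goodSet N] with θ hθ
      have hds : ∀ β : Fin 2, deriv (fun u => X (m + 1) u β - X m u β) θ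
          = deriv (fun u => X (m + 1) u β) θ - deriv (fun u => X m u β) θ := fun β =>
        deriv_sub (sh_diff_good hN (hXSh (m + 1) β) hθ) (sh_diff_good hN (hXSh m β) hθ)
      simp only [Fin.sum_univ_two, hds, Pi.zero_apply]
      nlinarith [sq_nonneg (deriv (fun u => X (m + 1) u 0) θ - deriv (fun u => X m u 0) θ),
        sq_nonneg (deriv (fun u => X (m + 1) u 1) θ - deriv (fun u => X m u 1) θ)]
    have hsplit : (∫ θ in (0 : ℝ)..(2 * Real.pi),
        ((∑ β : Fin 2, deriv (fun u => X (m + 1) u β) θ * deriv (fun u => X (m + 1) u β - X m u β) θ) + ((1 / 2) * (∑ β : Fin 2, (deriv (fun u => X m u β) θ) ^ 2) - (1 / 2) * (∑ β : Fin 2, (deriv (fun u => X (m + 1) u β) θ) ^ 2))))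
        = (∫ θ in (0 : ℝ)..(2 * Real.pi), ∑ β : Fin 2, deriv (fun u => X (m + 1) u β) θ * deriv (fun u => X (m + 1) u β - X m u β) θ)
          + ((1 / 2) * (∫ θ in (0 : ℝ)..(2 * Real.pi), ∑ β : Fin 2, (deriv (fun u => X m u β) θ) ^ 2) - (1 / 2) * (∫ θ in (0 : ℝ)..(2 * Real.pi), ∑ β : Fin 2, (deriv (fun u => X (m + 1) u β) θ) ^ 2)) := by
      rw [intervalIntegral.integral_add hPint
          (((hQint m).const_mul _).sub ((hQint (m + 1)).const_mul _)),
        intervalIntegral.integral_sub ((hQint m).const_mul _) ((hQint (m + 1)).const_mul _),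
        intervalIntegral.integral_const_mul, intervalIntegral.integral_const_mul]
    rw [hsplit] at hnn
    linarith
  have hsum : ∑ m ∈ Finset.range M, (∫ θ in (0 : ℝ)..(2 * Real.pi),
        ((α / τ) * ∑ β, (X (m + 1) θ β - X m θ β) ^ 2
          + ((1 - α) / τ) * (∑ β, (X (m + 1) θ β - X m θ β) * νh m θ β) ^ 2)
        * (∑ β, (deriv (fun u => X m u β) θ) ^ 2))
      ≤ ∑ m ∈ Finset.range M,
        ((fun k => (∫ θ in (0 : ℝ)..(2 * Real.pi), ∑ β, (deriv (fun u => X k u β) θ) ^ 2) / 2) m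
          - (fun k => (∫ θ in (0 : ℝ)..(2 * Real.pi), ∑ β, (deriv (fun u => X k u β) θ) ^ 2) / 2) (m+1)) :=
    Finset.sum_le_sum fun m hm => key m (Finset.mem_range.mp hm)
  rw [Finset.sum_range_sub'
    (f := fun k => (∫ θ in (0 : ℝ)..(2 * Real.pi), ∑ β, (deriv (fun u => X k u β) θ) ^ 2) / 2)] at hsum
  linarith
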